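/- arXiv:1911.05752 — 2 statements merged into one kernel-verified Lean document; each statement's English description precedes it below -/
import Mathlib

section
/- Let μ and ν be finite measures on a measurable space S, let g : S → ℝ be a nonnegative measurable function integrable with respect to both μ and ν, and let f : S → ℝ be a measurable function with |f(x)| ≤ M for all x ∈ S. Suppose ∫ g dμ ≥ k for some constant k > 0 and ∫ g dν > 0. Then |(∫ f·g dμ)/(∫ g dμ) − (∫ f·g dν)/(∫ g dν)| ≤ (1/k)·|∫ f·g dμ − ∫ f·g dν| + (M/k)·|∫ g dν − ∫ g dμ|. -/
open MeasureTheory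

/-- Stability estimate for the Bayes-rule normalization. For finite measures
`μ, ν`, a nonnegative integrable likelihood `g` with `∫ g dμ ≥ k > 0` and `∫ g dν > 0`,
and `f` measurable with `|f| ≤ M`, the normalized expectations satisfy
`|μ(fg)/μ(g) − ν(fg)/ν(g)| ≤ (1/k)|μ(fg) − ν(fg)| + (M/k)|ν(g) − μ(g)|`. -/
theorem bayes_normalization_stability
    {S : Type*} [MeasurableSpace S] (μ ν : Measure S) [IsFiniteMeasure μ] [IsFiniteMeasure ν]
    (g : S → ℝ) (hg : Measurable g) (hg0 : ∀ x, 0 ≤ g x)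
    (hgμ : Integrable g μ) (hgν : Integrable g ν)
    (f : S → ℝ) (hf : Measurable f) (M : ℝ) (hM : ∀ x, |f x| ≤ M)
    (k : ℝ) (hk : 0 < k) (hkμ : k ≤ ∫ x, g x ∂μ) (hν : 0 < ∫ x, g x ∂ν) :
    |(∫ x, f x * g x ∂μ) / (∫ x, g x ∂μ) - (∫ x, f x * g x ∂ν) / (∫ x, g x ∂ν)|
      ≤ (1 / k) * |(∫ x, f x * g x ∂μ) - (∫ x, f x * g x ∂ν)|
        + (M / k) * |(∫ x, g x ∂ν) - (∫ x, g x ∂μ)| := by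
  set A := ∫ x, f x * g x ∂μ with hAdef
  set B := ∫ x, g x ∂μ with hBdef
  set C := ∫ x, f x * g x ∂ν with hCdef
  set D := ∫ x, g x ∂ν with hDdef
  have hB : 0 < B := lt_of_lt_of_le hk hkμ
  have hfgν : Integrable (fun x => f x * g x) ν :=
    (hgν.const_mul M).mono' ((hf.mul hg).aestronglyMeasurable)
      (Filter.Eventually.of_forall fun x => by
        simp only [norm_mul, Real.norm_eq_abs]
        calc |f x| * |g x| ≤ M * |g x| := by
              have := abs_nonneg (g x); gcongr; exact hM x
          _ = M * g x := by rw [abs_of_nonneg (hg0 x)])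
  have hCle : |C| ≤ M * D := by
    calc |C| ≤ ∫ x, |f x * g x| ∂ν := by
          simpa [abs_mul] using norm_integral_le_integral_norm (μ := ν) (fun x => f x * g x)
      _ ≤ ∫ x, M * g x ∂ν := by
          refine integral_mono hfgν.abs (hgν.const_mul M) fun x => ?_
          calc |f x * g x| = |f x| * |g x| := abs_mul _ _
            _ ≤ M * |g x| := by
                have := abs_nonneg (g x); gcongr; exact hM x
            _ = M * g x := by rw [abs_of_nonneg (hg0 x)]
      _ = M * D := by rw [integral_const_mul]
  have hM0 : 0 ≤ M := by nlinarith [abs_nonneg C]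
  have key : A / B - C / D = (A - C) / B + (C / D) * ((D - B) / B) := by
    field_simp
    ring
  have hCD : |C / D| ≤ M := by
    rw [abs_div, abs_of_pos hν]
    exact (div_le_iff₀ hν).2 hCle
  calc |A / B - C / D| = |(A - C) / B + (C / D) * ((D - B) / B)| := by rw [key]
    _ ≤ |(A - C) / B| + |(C / D) * ((D - B) / B)| := abs_add_le _ _
    _ = |A - C| / B + |C / D| * (|D - B| / B) := by
        simp [abs_mul, abs_div, abs_of_pos hB]
    _ ≤ |A - C| / k + M * (|D - B| / k) := by
        gcongr <;> first | exact hCD | exact abs_nonneg _ | exact div_nonneg (abs_nonneg _) hB.le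
    _ = (1 / k) * |A - C| + (M / k) * |D - B| := by ring
end

section
/- Let (Ω, P) be a probability space, m, n ∈ ℕ, and w : Fin m → ℝ nonnegative weights with ∑ᵢ wᵢ = 1. Let I₁, …, Iₙ : Ω → Fin m be independent identically distributed random variables with P(Iₖ = i) = wᵢ for each i. Define the multinomial count ξᵢ := card{k ∈ {1,…,n} : Iₖ = i}. Then for every q : Fin m → ℝ with |qᵢ| ≤ 1 for all i, E[( ∑ᵢ qᵢ·(ξᵢ − n·wᵢ) )²] ≤ n. -/
open MeasureTheory ProbabilityTheory Finset

/-- Multinomial branching satisfies the quadratic-form bound with constant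
`c = 1`: for any `q` with `|qᵢ| ≤ 1`, `E[(∑ᵢ qᵢ (ξᵢ − n wᵢ))²] ≤ n`. -/
theorem multinomial_quadratic_form_bound
    {Ω : Type*} [MeasurableSpace Ω] (P : Measure Ω) [IsProbabilityMeasure P]
    (m n : ℕ) (w : Fin m → ℝ) (hw0 : ∀ i, 0 ≤ w i) (hw1 : ∑ i, w i = 1)
    (I : Fin n → Ω → Fin m)
    (hImeas : ∀ k, Measurable (I k))
    (hindep : iIndepFun I P)
    (hdist : ∀ k i, P {ω | I k ω = i} = ENNReal.ofReal (w i)) :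
    ∀ q : Fin m → ℝ, (∀ i, |q i| ≤ 1) →
      ∫ ω, (∑ i, q i * (((univ.filter fun k : Fin n => I k ω = i).card : ℝ) - n * w i)) ^ 2 ∂P
        ≤ n := by
  intro q hq
  set Y : Fin n → Ω → ℝ := fun k ω => q (I k ω) with hY
  set μq : ℝ := ∑ i, q i * w i with hμq
  -- Measurability of Y k
  have hYmeas : ∀ k, Measurable (Y k) := fun k =>
    (measurable_of_countable q).comp (hImeas k)
  -- boundedness
  have hYbdd : ∀ k ω, |Y k ω| ≤ 1 := fun k ω => hq _
  have hYmem : ∀ k, MemLp (Y k) 2 P := fun k =>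
    MemLp.of_bound (hYmeas k).aestronglyMeasurable 1
      (ae_of_all _ fun ω => by simpa using hYbdd k ω)
  -- Expectation of Y k
  have hYint : ∀ k, ∫ ω, Y k ω ∂P = μq := by
    intro k
    have : (fun ω => Y k ω) = fun ω => ∑ i, Set.indicator {ω | I k ω = i} (fun _ => q i) ω := by
      funext ω
      rw [Finset.sum_eq_single (I k ω)]
      · simp [Set.indicator_of_mem, Y]
      · intro i _ hi
        exact Set.indicator_of_notMem (by simpa using fun h => hi h.symm) _
      · simp
    rw [this, integral_finset_sum]
    · refine Finset.sum_congr rfl fun i _ => ?_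
      rw [integral_indicator_const (q i)
        (show MeasurableSet {ω | I k ω = i} from (hImeas k) (MeasurableSet.singleton i))]
      simp [Measure.real_def, hdist k i, ENNReal.toReal_ofReal (hw0 i), mul_comm]
    · intro i _
      exact (integrable_const (q i)).indicator ((hImeas k) (MeasurableSet.singleton i))
  -- Variance bound
  have hvar : ∀ k, variance (Y k) P ≤ 1 := by
    intro k
    rw [variance_eq_sub (hYmem k)]
    have h1 : ∫ ω, (Y k ω) ^ 2 ∂P ≤ ∫ _, (1 : ℝ) ∂P := by
      apply integral_mono ((hYmem k).integrable_sq) (integrable_const 1)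
      intro ω
      have := hYbdd k ω
      show Y k ω ^ 2 ≤ 1
      nlinarith [sq_abs (Y k ω), abs_nonneg (Y k ω)]
    have h2 : ∫ _, (1 : ℝ) ∂P = 1 := by simp
    have := sq_nonneg (∫ ω, Y k ω ∂P)
    simp only [Pi.pow_apply] at *
    linarith
  -- Independence of the Y k
  have hYindep : iIndepFun Y P :=
    hindep.comp _ (fun k => measurable_of_countable q)
  -- variance of the sum
  have hvarsum : variance (∑ k, Y k) P ≤ n := by
    rw [IndepFun.variance_sum (fun k _ => hYmem k)
      (fun i _ j _ hij => hYindep.indepFun hij)]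
    calc ∑ k, variance (Y k) P ≤ ∑ _k : Fin n, (1 : ℝ) :=
          Finset.sum_le_sum fun k _ => hvar k
      _ = n := by simp
  -- identify the integrand with the centered sum
  have hpt : ∀ ω, ∑ i, q i * (((univ.filter fun k : Fin n => I k ω = i).card : ℝ) - n * w i)
      = (∑ k, Y k ω) - n * μq := by
    intro ω
    have hsum : ∑ i, q i * ((univ.filter fun k : Fin n => I k ω = i).card : ℝ)
        = ∑ k, Y k ω := by
      rw [← Finset.sum_fiberwise' univ (fun k => I k ω) q]
      refine Finset.sum_congr rfl fun i _ => ?_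
      rw [Finset.sum_const, nsmul_eq_mul, mul_comm]
    simp only [mul_sub]
    rw [Finset.sum_sub_distrib, hsum, hμq]
    rw [Finset.mul_sum]
    congr 1
    refine Finset.sum_congr rfl fun i _ => by ring
  -- expectation of the sum
  have hsumint : ∫ ω, (∑ k, Y k ω) ∂P = n * μq := by
    rw [integral_finset_sum _ (fun k _ => (hYmem k).integrable one_le_two)]
    simp [hYint]
  have hsummem : MemLp (∑ k, Y k) 2 P := memLp_finset_sum' _ (fun k _ => hYmem k)
  have hveq := variance_eq_integral hsummem.1.aemeasurable
  calc ∫ ω, (∑ i, q i * (((univ.filter fun k : Fin n => I k ω = i).card : ℝ) - n * w i)) ^ 2 ∂P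
      = ∫ ω, ((∑ k, Y k ω) - n * μq) ^ 2 ∂P := by
        refine integral_congr_ae (ae_of_all _ fun ω => ?_)
        dsimp only
        rw [hpt ω]
    _ = variance (∑ k, Y k) P := by
        rw [hveq]
        refine integral_congr_ae (ae_of_all _ fun ω => ?_)
        simp only [Pi.pow_apply, Pi.sub_apply, Finset.sum_apply]
        rw [hsumint]
    _ ≤ n := hvarsum
end
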